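/- Let χ be a primitive Dirichlet character modulo q, let m₁, m₂, m₃ be integers, and let r be a positive integer with gcd(r, q) = 1, with inverse r̄ ∈ ℤ/qℤ. Then H_χ(m₁, m₂, m₃, r) = e_q(−m₁·m₂·m₃·(r̄)̃) · ∑_{t,u ∈ ℤ/qℤ} χ(t + m₂) · conj(χ)(t) · conj(χ)(u + m₁) · χ(u) · e_q(m₃·(r̄·u·t)̃), where (r̄)̃ and (r̄·u·t)̃ ∈ {0,…,q−1} are the representatives of r̄ and of the product r̄·u·t in ℤ/qℤ. -/

import Mathlib

/-- e_q(x) = exp(2πi x / q). -/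
noncomputable def eN (q : ℕ) (x : ℤ) : ℂ :=
  Complex.exp (2 * Real.pi * Complex.I * x / q)

/-- H_χ(m₁,m₂,m₃,r) = ∑_{t,u ∈ ℤ/qℤ} χ(t+m₂u)·conj(χ)(rt+m₁m₂)·conj(χ)(u)·
χ(−m₁+ru)·e_q(m₃·t̃). -/
noncomputable def Hchi {q : ℕ} [NeZero q] (χ : DirichletCharacter ℂ q)
    (m₁ m₂ m₃ r : ℤ) : ℂ :=
  ∑ t : ZMod q, ∑ u : ZMod q,
    χ (t + (m₂ : ZMod q) * u) * (starRingEnd ℂ) (χ ((r : ZMod q) * t + ((m₁ * m₂ : ℤ) : ZMod q))) *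
      (starRingEnd ℂ) (χ u) * χ (-(m₁ : ZMod q) + (r : ZMod q) * u) *
      eN q (m₃ * (t.val : ℤ))

lemma eN_add (q : ℕ) (a b : ℤ) : eN q (a + b) = eN q a * eN q b := by
  unfold eN
  rw [← Complex.exp_add]
  congr 1
  push_cast
  ring

lemma eN_congr (q : ℕ) [NeZero q] {a b : ℤ} (h : ((a : ZMod q)) = (b : ZMod q)) :
    eN q a = eN q b := by
  have hd : (q : ℤ) ∣ a - b := by
    rwa [← ZMod.intCast_zmod_eq_zero_iff_dvd, Int.cast_sub, sub_eq_zero]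
  obtain ⟨k, hk⟩ := hd
  have ha : a = b + (q : ℤ) * k := by linarith
  rw [ha, eN_add]
  have h1 : eN q ((q : ℤ) * k) = 1 := by
    unfold eN
    have hq : (q : ℂ) ≠ 0 := Nat.cast_ne_zero.mpr (NeZero.ne q)
    rw [show 2 * Real.pi * Complex.I * (((q : ℤ) * k : ℤ) : ℂ) / q
        = (k : ℤ) * (2 * Real.pi * Complex.I) by push_cast; field_simp]
    exact Complex.exp_int_mul_two_pi_mul_I k
  rw [h1, mul_one]

lemma conj_chi_mul_self {q : ℕ} (χ : DirichletCharacter ℂ q) {a : ZMod q}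
    (h : IsUnit a) : (starRingEnd ℂ) (χ a) * χ a = 1 := by
  have h1 : ‖χ a‖ = 1 := by
    have := χ.unit_norm_eq_one h.unit
    rwa [IsUnit.unit_spec] at this
  rw [mul_comm, Complex.mul_conj, Complex.normSq_eq_norm_sq, h1]
  norm_num

/-- For χ primitive modulo q, integers m₁, m₂, m₃, and a positive integer r coprime to q
with inverse r̄ in ℤ/qℤ:
H_χ(m₁,m₂,m₃,r) = e_q(−m₁m₂m₃·(r̄)̃) · ∑_{t,u} χ(t+m₂)·conj(χ)(t)·conj(χ)(u+m₁)·χ(u)·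
e_q(m₃·(r̄ut)̃). -/
theorem Hchi_eval_coprime {q : ℕ} [NeZero q] (χ : DirichletCharacter ℂ q)
    (hχ : χ.IsPrimitive) (m₁ m₂ m₃ : ℤ) (r : ℤ) (hr : 0 < r)
    (hrq : Int.gcd r (q : ℤ) = 1) :
    Hchi χ m₁ m₂ m₃ r =
      eN q (-(m₁ * m₂ * m₃) * ((((r : ZMod q))⁻¹).val : ℤ)) *
        ∑ t : ZMod q, ∑ u : ZMod q,
          χ (t + (m₂ : ZMod q)) * (starRingEnd ℂ) (χ t) *
            (starRingEnd ℂ) (χ (u + (m₁ : ZMod q))) * χ u *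
            eN q (m₃ * (((((r : ZMod q))⁻¹ * u * t)).val : ℤ)) := by
  classical
  set R : ZMod q := (r : ZMod q) with hRdef
  set Ri : ZMod q := R⁻¹ with hRidef
  have hR : IsUnit R := by
    have h1 : IsCoprime (r : ℤ) (q : ℤ) := Int.isCoprime_iff_gcd_eq_one.mpr hrq
    have h2 := h1.map (Int.castRingHom (ZMod q))
    simp only [map_natCast, map_intCast, ZMod.natCast_self] at h2
    exact isCoprime_zero_right.mp h2
  have hRRi : R * Ri = 1 := ZMod.mul_inv_of_unit R hR
  have hRi : IsUnit Ri := IsUnit.of_mul_eq_one (a := Ri) R (by rw [mul_comm]; exact hRRi)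
  obtain ⟨uR, huR⟩ := hR
  set c : ZMod q := Ri * ((m₁ * m₂ : ℤ) : ZMod q) with hcdef
  set E0 : ℂ := eN q (-(m₁ * m₂ * m₃) * (Ri.val : ℤ)) with hE0def
  have key1 : Hchi χ m₁ m₂ m₃ r =
      ∑ s : ZMod q, ∑ v : ZMod q,
        E0 * (χ (s + Ri * (m₂ : ZMod q) * v) * (starRingEnd ℂ) (χ s) *
          (starRingEnd ℂ) (χ (v + (m₁ : ZMod q))) * χ v * eN q (m₃ * (s.val : ℤ))) := by
    rw [Hchi]
    refine Fintype.sum_equiv (Equiv.addRight c) _ _ (fun t => ?_)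
    refine Fintype.sum_equiv ((Units.mulLeft uR).trans (Equiv.subRight ((m₁ : ℤ) : ZMod q)))
      _ _ (fun u => ?_)
    simp only [Equiv.trans_apply, Units.mulLeft_apply, Equiv.subRight_apply,
      Equiv.coe_addRight, huR]
    have b1 : t + (m₂ : ZMod q) * u = (t + c) + Ri * (m₂ : ZMod q) * (R * u - (m₁ : ZMod q)) := by
      rw [hcdef]
      push_cast
      linear_combination (-((m₂ : ZMod q) * u)) * hRRi
    have b2 : R * t + ((m₁ * m₂ : ℤ) : ZMod q) = R * (t + c) := by
      rw [hcdef]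
      linear_combination (-((m₁ * m₂ : ℤ) : ZMod q)) * hRRi
    have b3 : (R * u - (m₁ : ZMod q)) + (m₁ : ZMod q) = R * u := by ring
    have b4 : -(m₁ : ZMod q) + R * u = R * u - (m₁ : ZMod q) := by ring
    have b5 : eN q (m₃ * (t.val : ℤ)) = E0 * eN q (m₃ * ((t + c).val : ℤ)) := by
      rw [hE0def, ← eN_add]
      apply eN_congr
      push_cast [ZMod.natCast_val, ZMod.cast_id]
      rw [hcdef]
      push_cast
      ring
    rw [b1, b2, b3, b4, b5, map_mul χ R (t + c), map_mul (starRingEnd ℂ) (χ R) (χ (t + c)), map_mul χ R u, map_mul (starRingEnd ℂ) (χ R) (χ u)]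
    ring
  have key2 : (∑ s : ZMod q, ∑ v : ZMod q,
        χ (s + Ri * (m₂ : ZMod q) * v) * (starRingEnd ℂ) (χ s) *
          (starRingEnd ℂ) (χ (v + (m₁ : ZMod q))) * χ v * eN q (m₃ * (s.val : ℤ)))
      = ∑ t : ZMod q, ∑ u : ZMod q,
          χ (t + (m₂ : ZMod q)) * (starRingEnd ℂ) (χ t) *
            (starRingEnd ℂ) (χ (u + (m₁ : ZMod q))) * χ u *
            eN q (m₃ * ((Ri * u * t).val : ℤ)) := by
    rw [Finset.sum_comm]
    conv_rhs => rw [Finset.sum_comm]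
    refine Finset.sum_congr rfl (fun v _ => ?_)
    by_cases hv : IsUnit v
    · obtain ⟨w, hw⟩ := hRi.mul hv
      refine Fintype.sum_equiv (Units.mulLeft w⁻¹) _ _ (fun s => ?_)
      simp only [Units.mulLeft_apply]
      have hst : s = Ri * v * ((w⁻¹ : (ZMod q)ˣ) * s) := by
        rw [← hw, Units.mul_inv_cancel_left]
      set t0 : ZMod q := (w⁻¹ : (ZMod q)ˣ) * s with ht0
      rw [hst]
      have a1 : Ri * v * t0 + Ri * (m₂ : ZMod q) * v = Ri * v * (t0 + (m₂ : ZMod q)) := by ring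
      have h1 : (starRingEnd ℂ) (χ (Ri * v)) * χ (Ri * v) = 1 :=
        conj_chi_mul_self χ (hRi.mul hv)
      rw [a1, map_mul χ (Ri * v) (t0 + (m₂ : ZMod q)), map_mul χ (Ri * v) t0, map_mul (starRingEnd ℂ) (χ (Ri * v)) (χ t0)]
      linear_combination (χ (t0 + (m₂ : ZMod q)) * (starRingEnd ℂ) (χ t0) *
        (starRingEnd ℂ) (χ (v + (m₁ : ZMod q))) * χ v * eN q (m₃ * ((Ri * v * t0).val : ℤ))) * h1
    · simp [χ.map_nonunit hv]
  rw [key1]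
  simp_rw [← Finset.mul_sum]
  rw [key2]
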